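/- arXiv:1603.03509 — 2 statements merged into one kernel-verified Lean document; each statement's English description precedes it below -/
import Mathlib

section
/- Parametrised miniaturised Maclagan theorem (MM_f): let K be a field and f : ℕ → ℕ nondecreasing. For all d, l ∈ ℕ there exists M ∈ ℕ such that for every sequence I_0, …, I_M of monomial ideals in K[X_d, …, X_0, Y] with deg(I_i) ≤ l + f(i) for all i ≤ M, there exist i < j ≤ M with I_i ⊇ I_j. -/
open Set

section Order

variable {α : Type*}

/-- From a `SublistForall₂` embedding, every entry of `l₁` is related to an entry of `l₂`
whose distance to the end of `l₂` is at least the distance to the end in `l₁`. -/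
lemma sublistForall₂_index {r : α → α → Prop} :
    ∀ {l₁ l₂ : List α}, List.SublistForall₂ r l₁ l₂ →
      ∀ k (hk : k < l₁.length), ∃ k', ∃ (hk' : k' < l₂.length),
        r (l₁.get ⟨k, hk⟩) (l₂.get ⟨k', hk'⟩) ∧ l₁.length - k ≤ l₂.length - k' := by
  intro l₁ l₂ h
  induction h with
  | nil => intro k hk; simp at hk
  | @cons a b t₁ t₂ hab ht ih =>
      intro k hk
      match k with
      | 0 =>
          refine ⟨0, by simp, hab, ?_⟩
          have : t₁.length ≤ t₂.length := by
            obtain ⟨l, hl, hsub⟩ := List.sublistForall₂_iff.1 ht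
            calc t₁.length = l.length := hl.length_eq
              _ ≤ t₂.length := hsub.length_le
          simpa using Nat.succ_le_succ this
      | k + 1 =>
          obtain ⟨k', hk', hr, hlen⟩ := ih k (by simpa using hk)
          exact ⟨k' + 1, by simpa using hk', hr, by simp only [List.length_cons]; omega⟩
  | @cons_right b t₁ t₂ ht ih =>
      intro k hk
      obtain ⟨k', hk', hr, hlen⟩ := ih k hk
      refine ⟨k' + 1, by simpa using hk', hr, ?_⟩
      simp only [List.length_cons]
      omega

variable [PartialOrder α]

/-- Antitone sequences with values in a PWO collection are eventually constant. -/
lemma antitone_eventually_const {s : Set α} (hs : s.IsPWO) (a : ℕ → α)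
    (ha : Antitone a) (hmem : ∀ m, a m ∈ s) : ∃ N, ∀ m, N ≤ m → a m = a N := by
  by_contra hcon
  push_neg at hcon
  -- build a strictly decreasing subsequence
  have step : ∀ N, ∃ m, N < m ∧ a m < a N := by
    intro N
    obtain ⟨m, hNm, hne⟩ := hcon N
    have hlt : a m < a N := lt_of_le_of_ne (ha hNm) hne
    exact ⟨m, lt_of_le_of_ne hNm (by rintro rfl; exact hne rfl), hlt⟩
  choose nxt hnxt1 hnxt2 using step
  let g : ℕ → ℕ := fun k => Nat.rec 0 (fun _ n => nxt n) k
  have hg : ∀ k, a (g (k + 1)) < a (g k) := fun k => hnxt2 (g k)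
  have hsa : StrictAnti (a ∘ g) := strictAnti_nat_of_succ_lt hg
  obtain ⟨i, j, hij, hle⟩ := Set.PartiallyWellOrderedOn.exists_lt hs (f := a ∘ g) (fun k => hmem _)
  exact absurd hle (not_le_of_gt (hsa hij))

/-- Key step: if the lower sets of `β` are PWO under `⊆`, so are those of `β × ℕ`. -/
lemma lowerSet_pwo_step {β : Type*} [PartialOrder β]
    (h : {A : Set β | IsLowerSet A}.IsPWO) :
    {A : Set (β × ℕ) | IsLowerSet A}.IsPWO := by
  rw [Set.IsPWO, Set.partiallyWellOrderedOn_iff_exists_lt]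
  intro F hF
  -- slices
  set L : ℕ → ℕ → Set β := fun m j => {x | (x, j) ∈ F m} with hL
  have hlow : ∀ m j, L m j ∈ {A : Set β | IsLowerSet A} := by
    intro m j x y hyx hx
    exact hF m (Prod.mk_le_mk.2 ⟨hyx, le_refl j⟩) hx
  have hanti : ∀ m, Antitone (L m) := by
    intro m j j' hjj' x hx
    exact hF m (Prod.mk_le_mk.2 ⟨le_refl x, hjj'⟩) hx
  have hstab : ∀ m, ∃ N, ∀ j, N ≤ j → L m j = L m N := fun m =>
    antitone_eventually_const h (L m) (hanti m) (hlow m)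
  choose N hN using hstab
  -- encode as (limit, reversed word)
  let lim : ℕ → Set β := fun m => L m (N m)
  let word : ℕ → List (Set β) := fun m =>
    (List.range (N m)).map (fun t => L m (N m - 1 - t))
  haveI : IsRefl (Set β) (· ≤ ·) := ⟨le_refl⟩
  haveI : IsTrans (Set β) (· ≤ ·) := ⟨fun _ _ _ => le_trans⟩
  have hig := Set.PartiallyWellOrderedOn.partiallyWellOrderedOn_sublistForall₂
    (r := ((· ≤ ·) : Set β → Set β → Prop)) (s := {A : Set β | IsLowerSet A}) h
  have hprod := Set.PartiallyWellOrderedOn.prod (t := { l : List (Set β) | ∀ x ∈ l, IsLowerSet x}) h hig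
  obtain ⟨i, j, hij, hpair⟩ := Set.PartiallyWellOrderedOn.exists_lt hprod (f := fun m => (lim m, word m)) (by
    intro m
    refine Set.mk_mem_prod (hlow m (N m)) ?_
    intro x hx
    simp only [word, List.mem_map, List.mem_range] at hx
    obtain ⟨t, _, rfl⟩ := hx
    exact hlow m _)
  dsimp only at hpair
  obtain ⟨hfst, hsnd⟩ := hpair
  refine ⟨i, j, hij, ?_⟩
  -- show F i ⊆ F j via slices
  have hslice : ∀ t, L i t ⊆ L j t := by
    intro t
    rcases le_or_gt (N i) t with hti | hti
    · -- t beyond stabilization of i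
      have h1 : L i t = lim i := hN i t hti
      have h2 : lim j ⊆ L j t := by
        rcases le_or_gt (N j) t with htj | htj
        · rw [hN j t htj]
        · exact hanti j htj.le
      rw [h1]; exact Set.Subset.trans hfst h2
    · -- use the word embedding
      have hklt : N i - 1 - t < (word i).length := by
        simp only [word, List.length_map, List.length_range]; omega
      obtain ⟨k', hk', hr, hlen⟩ := sublistForall₂_index hsnd (N i - 1 - t) hklt
      have hwl : (word i).length = N i := by simp [word]
      have hwl' : (word j).length = N j := by simp [word]
      have hget1 : (word i).get ⟨N i - 1 - t, hklt⟩ = L i t := by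
        simp only [word, List.get_eq_getElem, List.getElem_map, List.getElem_range]
        have harith : N i - 1 - (N i - 1 - t) = t := by omega
        rw [harith]
      have hget2 : (word j).get ⟨k', hk'⟩ = L j (N j - 1 - k') := by
        simp only [word, List.get_eq_getElem, List.getElem_map, List.getElem_range]
      rw [hget1, hget2] at hr
      have hk'N : k' < N j := by rwa [hwl'] at hk'
      have hlenN : N i - (N i - 1 - t) ≤ N j - k' := by rwa [hwl, hwl'] at hlen
      have htle : t ≤ N j - 1 - k' := by omega
      exact Set.Subset.trans hr (hanti j htle)
  intro p hp
  exact hslice p.2 (show p.1 ∈ L i p.2 from hp)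

/-- Transfer along a monotone surjection. -/
lemma lowerSet_pwo_transfer {γ δ : Type*} [Preorder γ] [Preorder δ]
    (v : δ → γ) (hv : Monotone v) (hsurj : Function.Surjective v)
    (h : {A : Set δ | IsLowerSet A}.IsPWO) :
    {A : Set γ | IsLowerSet A}.IsPWO := by
  rw [Set.IsPWO, Set.partiallyWellOrderedOn_iff_exists_lt]
  intro F hF
  obtain ⟨i, j, hij, hle⟩ := Set.PartiallyWellOrderedOn.exists_lt h (f := fun m => v ⁻¹' F m) (fun m => (hF m).preimage hv)
  refine ⟨i, j, hij, ?_⟩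
  intro x hx
  obtain ⟨y, rfl⟩ := hsurj x
  exact hle (show y ∈ v ⁻¹' F i from hx)

lemma lowerSet_pwo_pi : ∀ n : ℕ, {A : Set (Fin n → ℕ) | IsLowerSet A}.IsPWO := by
  intro n
  induction n with
  | zero => exact Set.isPWO_of_finite
  | succ n ih =>
      have hstep := lowerSet_pwo_step ih
      refine lowerSet_pwo_transfer (fun p : (Fin n → ℕ) × ℕ => Fin.cons p.2 p.1) ?_ ?_ hstep
      · intro p q hpq i
        refine Fin.cases ?_ ?_ i
        · simpa using hpq.2
        · intro k; simpa using hpq.1 k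
      · intro g
        exact ⟨(fun k => g k.succ, g 0), by
          funext i
          refine Fin.cases ?_ ?_ i <;> simp⟩

lemma lowerSet_pwo_finsupp (n : ℕ) : {A : Set (Fin n →₀ ℕ) | IsLowerSet A}.IsPWO := by
  refine lowerSet_pwo_transfer (fun g : Fin n → ℕ => Finsupp.equivFunOnFinite.symm g) ?_ ?_
    (lowerSet_pwo_pi n)
  · intro p q hpq
    rw [Finsupp.le_def]
    intro i
    simpa using hpq i
  · intro s
    exact ⟨s, by simp⟩

/-- Maclagan's theorem, infinite version, for upper sets: in any sequence of upper sets
of `Fin n →₀ ℕ` some earlier one contains a later one. -/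
lemma upperSet_seq (n : ℕ) (T : ℕ → Set (Fin n →₀ ℕ)) (hT : ∀ m, IsUpperSet (T m)) :
    ∃ i j, i < j ∧ T j ⊆ T i := by
  obtain ⟨i, j, hij, hle⟩ := Set.PartiallyWellOrderedOn.exists_lt (lowerSet_pwo_finsupp n) (f := fun m => (T m)ᶜ) (fun m => (hT m).compl)
  exact ⟨i, j, hij, compl_subset_compl.1 hle⟩

end Order

section Ideals

variable {K : Type*} [Field K] {n : ℕ}

local notation "R" => MvPolynomial (Fin n) K

def monSet (I : Ideal R) : Set (Fin n →₀ ℕ) := {s | MvPolynomial.monomial s (1 : K) ∈ I}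

lemma monSet_upper (I : Ideal R) : IsUpperSet (monSet (K := K) I) := by
  intro s s' hss' hs
  show MvPolynomial.monomial s' (1 : K) ∈ I
  have : MvPolynomial.monomial s' (1 : K) =
      MvPolynomial.monomial (s' - s) (1 : K) * MvPolynomial.monomial s (1 : K) := by
    rw [MvPolynomial.monomial_mul, one_mul, tsub_add_cancel_of_le hss']
  rw [this]
  exact Ideal.mul_mem_left _ _ hs

lemma span_monSet {I : Ideal R} {S : Set (Fin n →₀ ℕ)}
    (hI : I = Ideal.span ((fun s => (MvPolynomial.monomial s (1 : K))) '' S)) :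
    I = Ideal.span ((fun s => (MvPolynomial.monomial s (1 : K))) '' monSet I) := by
  have hS : S ⊆ monSet I := by
    intro s hs
    show MvPolynomial.monomial s (1 : K) ∈ I
    rw [hI]
    exact Ideal.subset_span ⟨s, hs, rfl⟩
  apply le_antisymm
  · conv_lhs => rw [hI]
    exact Ideal.span_mono (Set.image_mono hS)
  · rw [Ideal.span_le]
    rintro _ ⟨s, hs, rfl⟩
    exact hs

/-- Infinite Maclagan: a sequence of monomial ideals has a later one contained in an
earlier one. -/
lemma inf_maclagan (I : ℕ → Ideal R)
    (h : ∀ m, ∃ S, I m = Ideal.span ((fun s => (MvPolynomial.monomial s (1 : K))) '' S)) :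
    ∃ i j, i < j ∧ I j ≤ I i := by
  obtain ⟨i, j, hij, hsub⟩ := upperSet_seq n (fun m => monSet (I m))
    (fun m => monSet_upper (I m))
  refine ⟨i, j, hij, ?_⟩
  obtain ⟨Si, hSi⟩ := h i
  obtain ⟨Sj, hSj⟩ := h j
  rw [span_monSet hSi, span_monSet hSj]
  exact Ideal.span_mono (Set.image_mono hsub)

end Ideals

/-- `I` is a monomial ideal generated by monomials of total degree at most `deg`. -/
def MonGen {K : Type*} [Field K] {n : ℕ} (I : Ideal (MvPolynomial (Fin n) K)) (deg : ℕ) : Prop :=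
  ∃ S : Set (Fin n →₀ ℕ), (∀ s ∈ S, (s.sum fun _ e => e) ≤ deg) ∧
    I = Ideal.span ((fun s => (MvPolynomial.monomial s (1 : K))) '' S)

section Finiteness

variable {K : Type*} [Field K] {n : ℕ}

lemma finite_degSet (n D : ℕ) : {s : Fin n →₀ ℕ | (s.sum fun _ e => e) ≤ D}.Finite := by
  have hsub : {s : Fin n →₀ ℕ | (s.sum fun _ e => e) ≤ D} ⊆
      Set.Iic (Finsupp.equivFunOnFinite.symm (fun _ => D)) := by
    intro s hs
    rw [Set.mem_Iic, Finsupp.le_def]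
    intro i
    have hle : s i ≤ s.sum fun _ e => e := by
      by_cases hi : i ∈ s.support
      · exact Finset.single_le_sum (fun a _ => Nat.zero_le _) hi
      · simp [Finsupp.notMem_support_iff.1 hi]
    simpa using le_trans hle hs
  exact (Set.finite_Iic _).subset hsub

lemma finite_monGen (D : ℕ) : {J : Ideal (MvPolynomial (Fin n) K) | MonGen J D}.Finite := by
  have hB := finite_degSet n D
  haveI := hB.to_subtype
  set B : Set (Fin n →₀ ℕ) := {s | (s.sum fun _ e => e) ≤ D}
  set Φ : Set B → Ideal (MvPolynomial (Fin n) K) := fun S =>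
    Ideal.span ((fun s => (MvPolynomial.monomial s (1 : K))) '' (Subtype.val '' S))
  have hsub : {J : Ideal (MvPolynomial (Fin n) K) | MonGen J D} ⊆ Set.range Φ := by
    rintro J ⟨S, hSdeg, rfl⟩
    refine ⟨{x : B | ↑x ∈ S}, ?_⟩
    have : Subtype.val '' {x : B | ↑x ∈ S} = S := by
      apply Set.eq_of_subset_of_subset
      · rintro _ ⟨x, hx, rfl⟩; exact hx
      · intro s hs
        exact ⟨⟨s, hSdeg s hs⟩, hs, rfl⟩
    simp only [Φ, this]
  exact (Set.finite_range Φ).subset hsub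

end Finiteness

section Koenig

variable {K : Type*} [Field K] {d l : ℕ} {f : ℕ → ℕ}

/-- A bad sequence up to `M`. -/
def BadSeq (K : Type*) [Field K] (d : ℕ) (f : ℕ → ℕ) (l M : ℕ)
    (σ : ℕ → Ideal (MvPolynomial (Fin (d + 2)) K)) : Prop :=
  (∀ i ≤ M, MonGen (σ i) (l + f i)) ∧ ∀ i j, i < j → j ≤ M → ¬ σ j ≤ σ i

end Koenig

/-- Parametrised miniaturised Maclagan theorem (MM_f): for nondecreasing `f` and all
`d, l` there is `M` such that every sequence `I_0, …, I_M` of monomial ideals in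
`K[X_d, …, X_0, Y]` with `deg (I i) ≤ l + f i` admits `i < j ≤ M` with `I i ⊇ I j`. -/
theorem miniaturisedMaclagan_param (K : Type*) [Field K] (f : ℕ → ℕ) (hf : Monotone f)
    (d l : ℕ) :
    ∃ M : ℕ, ∀ I : ℕ → Ideal (MvPolynomial (Fin (d + 2)) K),
      (∀ i ≤ M, MonGen (I i) (l + f i)) →
      ∃ i j, i < j ∧ j ≤ M ∧ I j ≤ I i := by
  by_contra hcon
  push_neg at hcon
  -- for every M there is a bad sequence
  have hbad : ∀ M, ∃ σ, BadSeq K d f l M σ := by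
    intro M
    obtain ⟨σ, hσ1, hσ2⟩ := hcon M
    exact ⟨σ, hσ1, hσ2⟩
  classical
  -- extendable prefixes
  set P : ℕ → (ℕ → Ideal (MvPolynomial (Fin (d + 2)) K)) → Prop :=
    fun k g => ∀ M, ∃ σ, BadSeq K d f l M σ ∧ ∀ i < k, σ i = g i with hP
  have hP0 : P 0 (fun _ => ⊥) := by
    intro M
    obtain ⟨σ, hσ⟩ := hbad M
    exact ⟨σ, hσ, fun i hi => absurd hi (Nat.not_lt_zero i)⟩
  have hPstep : ∀ k g, P k g → ∃ v, P (k + 1) (Function.update g k v) := by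
    intro k g hPk
    haveI : Finite {J : Ideal (MvPolynomial (Fin (d + 2)) K) // MonGen J (l + f k)} :=
      (finite_monGen (l + f k)).to_subtype
    set χ : ℕ → {J : Ideal (MvPolynomial (Fin (d + 2)) K) // MonGen J (l + f k)} :=
      fun M => ⟨(hPk (M + k)).choose k, ((hPk (M + k)).choose_spec.1.1 k (by omega))⟩ with hχ
    obtain ⟨v, hv⟩ := Finite.exists_infinite_fiber χ
    rw [Set.infinite_coe_iff] at hv
    refine ⟨v.1, ?_⟩
    intro M
    obtain ⟨M₀, hM₀mem, hM₀ge⟩ := hv.exists_gt M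
    have hM₀ : χ M₀ = v := hM₀mem
    refine ⟨(hPk (M₀ + k)).choose, ?_, ?_⟩
    · obtain ⟨⟨hmg, hnb⟩, _⟩ := (hPk (M₀ + k)).choose_spec
      exact ⟨fun i hi => hmg i (by omega), fun i j hij hjM => hnb i j hij (by omega)⟩
    · intro i hik
      rcases Nat.lt_or_ge i k with hik' | hik'
      · rw [Function.update_of_ne (by omega)]
        exact (hPk (M₀ + k)).choose_spec.2 i hik'
      · have hik'' : i = k := by omega
        subst hik''
        rw [Function.update_self]
        have := congrArg Subtype.val hM₀
        simpa [hχ] using this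
  -- build the infinite sequence
  choose vfun hvfun using hPstep
  let G : (k : ℕ) → {g : ℕ → Ideal (MvPolynomial (Fin (d + 2)) K) // P k g} :=
    fun k => Nat.rec ⟨fun _ => ⊥, hP0⟩
      (fun k Gk => ⟨Function.update Gk.1 k (vfun k Gk.1 Gk.2), hvfun k Gk.1 Gk.2⟩) k
  have hGsucc : ∀ k, (G (k + 1)).1 = Function.update (G k).1 k (vfun k (G k).1 (G k).2) :=
    fun k => rfl
  let h : ℕ → Ideal (MvPolynomial (Fin (d + 2)) K) := fun i => (G (i + 1)).1 i
  have hGh : ∀ k i, i < k → (G k).1 i = h i := by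
    intro k
    induction k with
    | zero => intro i hi; exact absurd hi (Nat.not_lt_zero i)
    | succ k ih =>
        intro i hi
        rcases Nat.lt_or_ge i k with hik | hik
        · rw [hGsucc, Function.update_of_ne (by omega)]
          exact ih i hik
        · have : i = k := by omega
          subst this
          rfl
  -- h is a sequence of monomial ideals
  have hmono : ∀ m, ∃ S, h m =
      Ideal.span ((fun s => (MvPolynomial.monomial s (1 : K))) '' S) := by
    intro m
    obtain ⟨σ, ⟨hmg, _⟩, hagree⟩ := (G (m + 1)).2 m
    obtain ⟨S, _, hspan⟩ := hmg m (le_refl m)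
    refine ⟨S, ?_⟩
    rw [show h m = σ m from ((hagree m (by omega)).trans (hGh (m+1) m (by omega))).symm]
    exact hspan
  obtain ⟨i, j, hij, hle⟩ := inf_maclagan h hmono
  -- but h is bad
  obtain ⟨σ, ⟨_, hnb⟩, hagree⟩ := (G (j + 1)).2 j
  have hσi : σ i = h i := (hagree i (by omega)).trans (hGh (j + 1) i (by omega))
  have hσj : σ j = h j := (hagree j (by omega)).trans (hGh (j + 1) j (by omega))
  exact hnb i j hij (le_refl j) (by rw [hσi, hσj]; exact hle)
end

section
/- Let K be a field. For all c, j ∈ ℕ: M_{2c}^0(2^{c+1}·(j + 1)) ≥ 2^{j^{c+1}}; i.e., there exists a sequence of 2^{j^{c+1}} monomial ideals in K[X_{2c}, …, X_0, Y], each of degree ≤ 2^{c+1}·(j+1), in which no earlier ideal contains a later one. -/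
/-- `Mnum K d f l` : the least `M` (infimum of the set of such `M`) such that every
sequence `I_0, …, I_M` of monomial ideals in the `d+2`-variable polynomial ring over `K`
with `deg (I i) ≤ l + f i` for all `i ≤ M` admits `i < j ≤ M` with `I j ⊆ I i`. -/
noncomputable def Mnum (K : Type*) [Field K] (d : ℕ) (f : ℕ → ℕ) (l : ℕ) : ℕ :=
  sInf {M | ∀ I : ℕ → Ideal (MvPolynomial (Fin (d + 2)) K),
    (∀ i ≤ M, MonGen (I i) (l + f i)) →
    ∃ i j, i < j ∧ j ≤ M ∧ I j ≤ I i}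

lemma digits_sum (j : ℕ) (hj : 1 ≤ j) : ∀ m t, t < j ^ m →
    ∑ k ∈ Finset.range m, (t / j ^ k % j) * j ^ k = t := by
  intro m
  induction m with
  | zero => intro t ht; simp at ht; simp [ht]
  | succ m ih =>
    intro t ht
    rw [Finset.sum_range_succ']
    have h1 : ∀ k, t / j ^ (k+1) % j * j ^ (k+1) = ((t / j) / j ^ k % j * j ^ k) * j := by
      intro k
      have h2 : t / j / j ^ k = t / j ^ (k+1) := by
        rw [Nat.div_div_eq_div_mul, ← pow_succ']
      rw [h2, pow_succ]; ring
    simp only [h1]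
    rw [← Finset.sum_mul, ih (t / j) (by
      rw [Nat.div_lt_iff_lt_mul (by omega)]
      calc t < j ^ (m+1) := ht
        _ = j ^ m * j := pow_succ j m)]
    rw [pow_zero, Nat.div_one, mul_one, mul_comm]
    exact Nat.div_add_mod t j

lemma sum_pair (f : ℕ → ℕ) : ∀ m, ∑ v ∈ Finset.range (2*m), f v
    = ∑ k ∈ Finset.range m, (f (2*k) + f (2*k+1)) := by
  intro m
  induction m with
  | zero => simp
  | succ m ih =>
    have h : 2*(m+1) = (2*m+1)+1 := by omega
    rw [h, Finset.sum_range_succ, Finset.sum_range_succ, Finset.sum_range_succ, ih]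
    omega

/-- exponent function for the monomial encoding digit sequence of `t` and bit `b`. -/
def Fn (j t b : ℕ) : ℕ → ℕ := fun v =>
  if v % 2 = 0 then 2 * (t / j ^ (v/2) % j) + (if v = 0 then b else 0)
  else 2 * ((j-1) - t / j ^ (v/2) % j) + (if v = 1 then 1 - b else 0)

lemma Fn_even (j t b k : ℕ) :
    Fn j t b (2*k) = 2 * (t / j ^ k % j) + (if k = 0 then b else 0) := by
  unfold Fn
  rcases Nat.eq_zero_or_pos k with rfl | hk
  · norm_num
  · have h0 : 2*k % 2 = 0 := by omega
    have h1 : 2*k/2 = k := by omega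
    have h2 : ¬ (2*k = 0) := by omega
    have h3 : ¬ (k = 0) := by omega
    simp [h0, h1, h2, h3]

lemma Fn_odd (j t b k : ℕ) :
    Fn j t b (2*k+1) = 2 * ((j-1) - t / j ^ k % j) + (if k = 0 then 1 - b else 0) := by
  unfold Fn
  rcases Nat.eq_zero_or_pos k with rfl | hk
  · norm_num
  · have h0 : ¬((2*k+1) % 2 = 0) := by omega
    have h1 : (2*k+1)/2 = k := by omega
    have h2 : ¬ (2*k+1 = 1) := by omega
    have h3 : ¬ (k = 0) := by omega
    simp [h0, h1, h2, h3]

lemma Fn_sum (c j t b : ℕ) (hj : 1 ≤ j) (hb : b ≤ 1) :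
    ∑ v ∈ Finset.range (2*(c+1)), Fn j t b v = 2*(c+1)*(j-1) + 1 := by
  rw [sum_pair]
  have h : ∀ k, Fn j t b (2*k) + Fn j t b (2*k+1)
      = 2*(j-1) + (if k = 0 then 1 else 0) := by
    intro k
    rw [Fn_even, Fn_odd]
    have hd : t / j ^ k % j ≤ j - 1 := by
      have := Nat.mod_lt (t / j ^ k) (show 0 < j by omega); omega
    rcases Nat.eq_zero_or_pos k with rfl | hk
    · simp only [if_pos rfl, if_true, eq_self_iff_true, pow_zero, Nat.div_one] at hd ⊢; omega
    · have h3 : ¬ (k = 0) := by omega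
      simp only [if_neg h3]; omega
  simp only [h]
  rw [Finset.sum_add_distrib, Finset.sum_const, Finset.sum_ite_eq' (Finset.range (c+1)) 0]
  simp [Finset.mem_range]
  ring

noncomputable def Ee (c j t b : ℕ) : Fin (2*c+2) →₀ ℕ :=
  Finsupp.equivFunOnFinite.symm (fun v => Fn j t b v.1)

lemma Ee_apply (c j t b : ℕ) (v : Fin (2*c+2)) : Ee c j t b v = Fn j t b v.1 := rfl

lemma Ee_sum' (c j t b : ℕ) (hj : 1 ≤ j) (hb : b ≤ 1) :
    ∑ v : Fin (2*c+2), Ee c j t b v = 2*(c+1)*(j-1) + 1 := by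
  simp only [Ee_apply]
  rw [Fin.sum_univ_eq_sum_range (fun i => Fn j t b i) (2*c+2),
    show 2*c+2 = 2*(c+1) by ring, Fn_sum c j t b hj hb]

lemma Ee_sum (c j t b : ℕ) (hj : 1 ≤ j) (hb : b ≤ 1) :
    (Ee c j t b).sum (fun _ e => e) = 2*(c+1)*(j-1) + 1 := by
  rw [Finsupp.sum_fintype _ _ (fun _ => rfl)]
  exact Ee_sum' c j t b hj hb

lemma Ee_inj (c j : ℕ) {t t' b b' : ℕ} (ht : t < j^(c+1)) (ht' : t' < j^(c+1))
    (hb : b ≤ 1) (hb' : b' ≤ 1) (h : Ee c j t b = Ee c j t' b') : t = t' ∧ b = b' := by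
  have hj : 1 ≤ j := by
    rcases Nat.eq_zero_or_pos j with rfl | h1
    · simp at ht
    · exact h1
  have happ : ∀ v : Fin (2*c+2), Fn j t b v.1 = Fn j t' b' v.1 := by
    intro v
    have := DFunLike.congr_fun h v
    simpa [Ee_apply] using this
  have hdig : ∀ k, k < c+1 → t / j^k % j = t' / j^k % j ∧ (k = 0 → b = b') := by
    intro k hk
    have hv : 2*k < 2*c+2 := by omega
    have h2 := happ ⟨2*k, hv⟩
    simp only [Fn_even] at h2
    by_cases hk0 : k = 0
    · subst hk0; norm_num at h2 ⊢; omega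
    · simp only [if_neg hk0] at h2
      exact ⟨by omega, fun h => absurd h hk0⟩
  have hbeq : b = b' := (hdig 0 (by omega)).2 rfl
  refine ⟨?_, hbeq⟩
  have h1 := digits_sum j hj (c+1) t ht
  have h2 := digits_sum j hj (c+1) t' ht'
  rw [← h1, ← h2]
  exact Finset.sum_congr rfl fun k hk => by
    rw [(hdig k (Finset.mem_range.mp hk)).1]

noncomputable def Iseq (K : Type*) [Field K] (c j : ℕ) :
    ℕ → Ideal (MvPolynomial (Fin (2*c+2)) K) :=
  fun i => Ideal.span ((fun s => MvPolynomial.monomial s (1:K)) ''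
    ((fun t => Ee c j t (i / 2^t % 2)) '' Set.Iio (j^(c+1))))

lemma deg_bound (c j : ℕ) (hj : 1 ≤ j) : 2*(c+1)*(j-1) + 1 ≤ 2^(c+1)*(j+1) := by
  obtain ⟨m, rfl⟩ : ∃ m, j = m + 1 := ⟨j-1, by omega⟩
  have h1 : c+1 ≤ 2^c := Nat.lt_two_pow_self (n := c)
  have h2 : 2*(c+1)*m ≤ 2*(2^c)*m := Nat.mul_le_mul_right m (Nat.mul_le_mul_left 2 h1)
  have h3 : 1 ≤ 2^c := Nat.one_le_two_pow
  have h4 : 2^(c+1)*(m+1+1) = 2*(2^c)*m + 4*(2^c) := by rw [pow_succ]; ring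
  have h5 : m + 1 - 1 = m := by omega
  rw [h5, h4]
  linarith

lemma Iseq_monGen (K : Type*) [Field K] (c j i : ℕ) :
    MonGen (Iseq K c j i) (2^(c+1)*(j+1)) := by
  refine ⟨_, ?_, rfl⟩
  rintro s ⟨t, ht, rfl⟩
  have hj : 1 ≤ j := by
    rcases Nat.eq_zero_or_pos j with rfl | h1
    · simp at ht
    · exact h1
  rw [Ee_sum c j t _ hj (by omega)]
  exact deg_bound c j hj

lemma Iseq_anti (K : Type*) [Field K] (c j : ℕ) (i i' : ℕ) (hne : i ≠ i')
    (hi : i < 2^(j^(c+1))) (hi' : i' < 2^(j^(c+1))) :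
    ¬ Iseq K c j i' ≤ Iseq K c j i := by
  classical
  intro hle
  have hbit : ∃ t < j^(c+1), i / 2^t % 2 ≠ i' / 2^t % 2 := by
    by_contra hb
    push_neg at hb
    apply hne
    rw [← digits_sum 2 (by norm_num) _ i hi, ← digits_sum 2 (by norm_num) _ i' hi']
    exact Finset.sum_congr rfl fun k hk => by rw [hb k (Finset.mem_range.mp hk)]
  obtain ⟨t, ht, hbt⟩ := hbit
  have hj : 1 ≤ j := by
    rcases Nat.eq_zero_or_pos j with rfl | h1
    · simp at ht
    · exact h1
  set b' := i' / 2^t % 2 with hb'def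
  have hmem : MvPolynomial.monomial (Ee c j t b') (1:K) ∈ Iseq K c j i' :=
    Ideal.subset_span ⟨Ee c j t b', ⟨t, ht, rfl⟩, rfl⟩
  have hmem2 := hle hmem
  unfold Iseq at hmem2
  rw [MvPolynomial.mem_ideal_span_monomial_image] at hmem2
  have hsup : (MvPolynomial.monomial (Ee c j t b') (1:K)).support = {Ee c j t b'} := by
    rw [MvPolynomial.support_monomial, if_neg (one_ne_zero)]
  obtain ⟨s, hsS, hsle⟩ := hmem2 (Ee c j t b') (by rw [hsup]; exact Finset.mem_singleton_self _)
  obtain ⟨t'', ht'', rfl⟩ := hsS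
  set b'' := i / 2^t'' % 2 with hb''def
  have hpt : ∀ v, Ee c j t'' b'' v ≤ Ee c j t b' v := fun v => hsle v
  have heq : Ee c j t'' b'' = Ee c j t b' := by
    ext v
    by_contra hvne
    have hlt : Ee c j t'' b'' v < Ee c j t b' v := lt_of_le_of_ne (hpt v) hvne
    have hstrict := Finset.sum_lt_sum (fun u _ => hpt u) ⟨v, Finset.mem_univ v, hlt⟩
    rw [Ee_sum' c j t'' b'' hj (by omega), Ee_sum' c j t b' hj (by omega)] at hstrict
    exact lt_irrefl _ hstrict
  obtain ⟨hteq, hbeq⟩ := Ee_inj c j ht'' ht (by omega) (by omega) heq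
  subst hteq
  exact hbt (by omega)

lemma exists_bound (K : Type*) [Field K] (n l : ℕ) :
    ∃ M : ℕ, ∀ I : ℕ → Ideal (MvPolynomial (Fin n) K),
      (∀ i ≤ M, MonGen (I i) l) → ∃ i j, i < j ∧ j ≤ M ∧ I j ≤ I i := by
  classical
  refine ⟨Fintype.card (Finset (Fin n → Fin (l+1))), ?_⟩
  set M := Fintype.card (Finset (Fin n → Fin (l+1))) with hM
  intro I hI
  set φ : Fin (M+1) → Finset (Fin n → Fin (l+1)) := fun i =>
    Finset.univ.filter (fun f =>
      MvPolynomial.monomial (Finsupp.equivFunOnFinite.symm (fun v => (f v : ℕ))) (1:K) ∈ I i.1)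
    with hφ
  obtain ⟨a, b, hab, hfeq⟩ := Fintype.exists_ne_map_eq_of_card_lt φ (by rw [Fintype.card_fin]; omega)
  have key : ∀ x y : Fin (M+1), φ x = φ y → I x.1 ≤ I y.1 := by
    intro x y hxy
    obtain ⟨S, hSdeg, hSspan⟩ := hI x.1 (Nat.lt_succ_iff.mp x.2)
    rw [hSspan, Ideal.span_le]
    rintro p ⟨s, hsS, rfl⟩
    have hcoord : ∀ v, s v ≤ l := by
      intro v
      calc s v ≤ s.sum (fun _ e => e) := by
            rw [Finsupp.sum_fintype _ _ (fun _ => rfl)]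
            exact Finset.single_le_sum (f := fun u => s u) (fun u _ => Nat.zero_le _)
              (Finset.mem_univ v)
        _ ≤ l := hSdeg s hsS
    set f : Fin n → Fin (l+1) := fun v => ⟨s v, Nat.lt_succ_of_le (hcoord v)⟩ with hf
    have hs : Finsupp.equivFunOnFinite.symm (fun v => ((f v : ℕ))) = s := by
      ext v; rfl
    have hmx : MvPolynomial.monomial s (1:K) ∈ I x.1 := by
      rw [hSspan]
      exact Ideal.subset_span ⟨s, hsS, rfl⟩
    have hfx : f ∈ φ x := by
      rw [hφ]
      simp only [Finset.mem_filter, Finset.mem_univ, true_and]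
      rw [hs]
      exact hmx
    rw [hxy, hφ] at hfx
    simp only [Finset.mem_filter, Finset.mem_univ, true_and] at hfx
    rw [hs] at hfx
    exact hfx
  have hIeq : I a.1 = I b.1 := le_antisymm (key a b hfeq) (key b a hfeq.symm)
  rcases Nat.lt_or_ge a.1 b.1 with h | h
  · exact ⟨a.1, b.1, h, Nat.lt_succ_iff.mp b.2, hIeq.symm.le⟩
  · have h2 : b.1 < a.1 :=
      lt_of_le_of_ne h (fun he => hab (Fin.ext he.symm))
    exact ⟨b.1, a.1, h2, Nat.lt_succ_iff.mp a.2, hIeq.le⟩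

/-- `M_{2c}^0(2^{c+1}·(j+1)) ≥ 2^{j^{c+1}}`: there is a bad sequence of `2^{j^{c+1}}`
monomial ideals of degree `≤ 2^{c+1}·(j+1)` in `K[X_{2c}, …, X_0, Y]`. -/
theorem lowerBound_M0_poly (K : Type*) [Field K] (c j : ℕ) :
    2 ^ (j ^ (c + 1)) ≤ Mnum K (2 * c) (fun _ => 0) (2 ^ (c + 1) * (j + 1)) ∧
    ∃ I : ℕ → Ideal (MvPolynomial (Fin (2 * c + 2)) K),
      (∀ i < 2 ^ (j ^ (c + 1)), MonGen (I i) (2 ^ (c + 1) * (j + 1))) ∧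
      ∀ i i', i < i' → i' < 2 ^ (j ^ (c + 1)) → ¬ I i' ≤ I i := by
  have hanti : ∀ i i' : ℕ, i < i' → i' < 2^(j^(c+1)) → ¬ Iseq K c j i' ≤ Iseq K c j i :=
    fun i i' h h' => Iseq_anti K c j i i' (Nat.ne_of_lt h) (h.trans h') h'
  constructor
  · apply le_csInf
    · obtain ⟨M, hMp⟩ := exists_bound K (2*c+2) (2^(c+1)*(j+1))
      exact ⟨M, fun I hI => hMp I (fun i hi => by simpa using hI i hi)⟩
    · intro M hM
      by_contra hlt
      push_neg at hlt
      obtain ⟨i, jj, hij, hjM, hle⟩ := hM (Iseq K c j)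
        (fun i _ => by simpa using Iseq_monGen K c j i)
      exact hanti i jj hij (lt_of_le_of_lt hjM hlt) hle
  · exact ⟨Iseq K c j, fun i _ => Iseq_monGen K c j i, hanti⟩
end
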